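/- Let k be a positive integer, let j_1,…,j_h ≤ k be distinct positive integers, and let a_1,…,a_h be positive integers. Then E[|𝓛(X_k)| · X_{j_1}^{a_1} ⋯ X_{j_h}^{a_h}] ≤ (C / (j_1 ⋯ j_h)) · E|𝓛(X_k)|, where C = ∏_{i=1}^h (B_{a_i} + B_{a_i + 1}) and B_m denotes the m-th moment E[Z^m] of a Poisson random variable Z with parameter 1 (the m-th Bell number). In particular, for h = 1 and a_1 = 1 one may take C = 3. -/

import Mathlib

open scoped BigOperators
open scoped ENNReal

noncomputable section

/-- The set `𝓛(c) = { m₁ + 2m₂ + ⋯ + k·m_k : 0 ≤ m_j ≤ c_j }`. -/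
def Lset (k : ℕ) (c : Fin k → ℕ) : Finset ℕ :=
  (Finset.Icc 0 c).image fun m => ∑ j : Fin k, ((j : ℕ) + 1) * m j

/-- Probability mass of a Poisson random variable with parameter `lam` at `n`. -/
def poissonPdf (lam : ℝ) (n : ℕ) : ℝ := Real.exp (-lam) * lam ^ n / (Nat.factorial n)

/-- Joint probability mass of the independent vector `X_k = (X_1,…,X_k)`,
`X_i ∼ Pois(1/i)`, at `c`. -/
def pmfVec (k : ℕ) (c : Fin k → ℕ) : ℝ := ∏ i : Fin k, poissonPdf (1 / ((i : ℕ) + 1)) (c i)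

/-- `E|𝓛(X_k)|`. -/
def EL (k : ℕ) : ℝ := ∑' c : Fin k → ℕ, ((Lset k c).card : ℝ) * pmfVec k c

/-- The `m`-th moment `E[Z^m]` of a Poisson random variable `Z` with parameter 1,
i.e. the `m`-th Bell number. -/
def bellMoment (m : ℕ) : ℝ := ∑' n : ℕ, (n : ℝ) ^ m * poissonPdf 1 n

namespace MixedMoment


lemma poissonPdf_nonneg {lam : ℝ} (hl : 0 ≤ lam) (n : ℕ) : 0 ≤ poissonPdf lam n := by
  unfold poissonPdf; positivity

lemma two_pow_le_fac (n : ℕ) : (2:ℕ)^n ≤ 2 * n.factorial := by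
  induction n with
  | zero => norm_num
  | succ n ih =>
    rcases Nat.eq_zero_or_pos n with rfl | hn
    · norm_num
    · rw [pow_succ, Nat.factorial_succ]
      calc (2:ℕ)^n * 2 ≤ 2 * n.factorial * 2 := Nat.mul_le_mul_right _ ih
        _ ≤ 2 * ((n+1) * n.factorial) := by nlinarith [Nat.one_le_iff_ne_zero.2 (Nat.factorial_ne_zero n)]

lemma poissonPdf_le {lam : ℝ} (h0 : 0 ≤ lam) (h1 : lam ≤ 1) (n : ℕ) :
    poissonPdf lam n ≤ 2 * (1/2:ℝ)^n := by
  have hfac : (0:ℝ) < n.factorial := by positivity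
  have h2 : (2:ℝ)^n ≤ 2 * n.factorial := by exact_mod_cast two_pow_le_fac n
  have hnum : Real.exp (-lam) * lam ^ n ≤ 1 := by
    have := Real.exp_le_one_iff.2 (neg_nonpos.2 h0)
    have hp : lam ^ n ≤ 1 := pow_le_one₀ h0 h1
    nlinarith [Real.exp_nonneg (-lam), pow_nonneg h0 n]
  calc poissonPdf lam n ≤ 1 / n.factorial := by
        unfold poissonPdf
        gcongr
    _ ≤ 2 * (1/2:ℝ)^n := by
        rw [div_pow, one_pow, mul_div_assoc']
        rw [div_le_div_iff₀ hfac (by positivity)]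
        nlinarith

lemma summable_moment {lam : ℝ} (h0 : 0 ≤ lam) (h1 : lam ≤ 1) (m : ℕ) :
    Summable (fun n : ℕ => (n:ℝ)^m * poissonPdf lam n) := by
  have hs : Summable (fun n : ℕ => (n:ℝ)^m * (2 * (1/2:ℝ)^n)) := by
    have := (summable_pow_mul_geometric_of_norm_lt_one (R := ℝ) m
      (r := (1/2:ℝ)) (by rw [Real.norm_eq_abs]; rw [abs_of_pos]; norm_num; norm_num)).mul_left 2
    apply this.congr
    intro n; ring
  apply hs.of_nonneg_of_le
  · intro n; have := poissonPdf_nonneg h0 n; positivity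
  · intro n
    exact mul_le_mul_of_nonneg_left (poissonPdf_le h0 h1 n) (by positivity)

lemma summable_poissonPdf (lam : ℝ) : Summable (poissonPdf lam) := by
  have := (Real.summable_pow_div_factorial lam).mul_left (Real.exp (-lam))
  apply this.congr
  intro n; unfold poissonPdf; ring

lemma tsum_poissonPdf (lam : ℝ) : ∑' n : ℕ, poissonPdf lam n = 1 := by
  have h1 : ∑' n : ℕ, lam ^ n / (n.factorial : ℝ) = Real.exp lam := by
    rw [Real.exp_eq_exp_ℝ, NormedSpace.exp_eq_tsum_div]
  unfold poissonPdf
  simp_rw [mul_div_assoc]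
  rw [tsum_mul_left, h1, ← Real.exp_add]
  simp

/-- ENNReal Poisson mass. -/
def pp (lam : ℝ) (n : ℕ) : ℝ≥0∞ := ENNReal.ofReal (poissonPdf lam n)

/-- ENNReal `m`-th moment. -/
def Mo (lam : ℝ) (m : ℕ) : ℝ≥0∞ := ∑' n : ℕ, (n : ℝ≥0∞)^m * pp lam n

lemma tsum_pp {lam : ℝ} (hl : 0 ≤ lam) : ∑' n : ℕ, pp lam n = 1 := by
  unfold pp
  rw [← ENNReal.ofReal_tsum_of_nonneg (poissonPdf_nonneg hl) (summable_poissonPdf lam),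
    tsum_poissonPdf, ENNReal.ofReal_one]

lemma pow_mul_pp {lam : ℝ} (hl : 0 ≤ lam) (m n : ℕ) :
    (n : ℝ≥0∞)^m * pp lam n = ENNReal.ofReal ((n:ℝ)^m * poissonPdf lam n) := by
  rw [ENNReal.ofReal_mul (by positivity), ENNReal.ofReal_pow (by positivity),
    ENNReal.ofReal_natCast]
  rfl

lemma Mo_eq_ofReal {lam : ℝ} (h0 : 0 ≤ lam) (h1 : lam ≤ 1) (m : ℕ) :
    Mo lam m = ENNReal.ofReal (∑' n : ℕ, (n:ℝ)^m * poissonPdf lam n) := by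
  rw [ENNReal.ofReal_tsum_of_nonneg (fun n => by
      have := poissonPdf_nonneg h0 n; positivity) (summable_moment h0 h1 m)]
  unfold Mo
  exact tsum_congr fun n => pow_mul_pp h0 m n

lemma Mo_ne_top {lam : ℝ} (h0 : 0 ≤ lam) (h1 : lam ≤ 1) (m : ℕ) : Mo lam m ≠ ⊤ := by
  rw [Mo_eq_ofReal h0 h1]; exact ENNReal.ofReal_ne_top

lemma Mo_zero {lam : ℝ} (hl : 0 ≤ lam) : Mo lam 0 = 1 := by
  unfold Mo
  simp_rw [pow_zero, one_mul]
  exact tsum_pp hl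

lemma bellMoment_nonneg (m : ℕ) : 0 ≤ bellMoment m :=
  tsum_nonneg fun n => by have := poissonPdf_nonneg zero_le_one n; positivity

lemma Mo_one_eq (m : ℕ) : Mo 1 m = ENNReal.ofReal (bellMoment m) :=
  Mo_eq_ofReal zero_le_one le_rfl m

lemma pdf_succ (lam : ℝ) (n : ℕ) :
    ((n:ℝ)+1) * poissonPdf lam (n+1) = lam * poissonPdf lam n := by
  unfold poissonPdf
  rw [Nat.factorial_succ]
  have h1 : ((n:ℝ)+1) ≠ 0 := by positivity
  have h2 : (n.factorial : ℝ) ≠ 0 := by positivity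
  push_cast
  field_simp
  ring

lemma pp_succ {lam : ℝ} (hl : 0 ≤ lam) (n : ℕ) :
    ((n:ℝ≥0∞)+1) * pp lam (n+1) = ENNReal.ofReal lam * pp lam n := by
  unfold pp
  rw [← ENNReal.ofReal_mul hl, ← pdf_succ lam n,
    ENNReal.ofReal_mul (by positivity)]
  congr 1
  rw [ENNReal.ofReal_add (by positivity) zero_le_one, ENNReal.ofReal_natCast,
    ENNReal.ofReal_one]

/-- Shift identity: `E[X^{m+1}] = lam * E[(X+1)^m]`. -/
lemma Mo_shift {lam : ℝ} (hl : 0 ≤ lam) (m : ℕ) :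
    Mo lam (m+1) = ENNReal.ofReal lam * ∑' n : ℕ, ((n:ℝ≥0∞)+1)^m * pp lam n := by
  unfold Mo
  rw [tsum_eq_zero_add' ENNReal.summable]
  have h0 : ((0:ℕ) : ℝ≥0∞)^(m+1) * pp lam 0 = 0 := by simp
  rw [h0, zero_add, ← ENNReal.tsum_mul_left]
  refine tsum_congr fun n => ?_
  have : ((n+1:ℕ) : ℝ≥0∞)^(m+1) * pp lam (n+1)
      = ((n:ℝ≥0∞)+1)^m * (((n:ℝ≥0∞)+1) * pp lam (n+1)) := by
    push_cast
    ring
  rw [this, pp_succ hl n]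
  ring

/-- Binomial expansion of `E[(X+1)^m]`. -/
lemma tsum_add_one_pow {lam : ℝ} (hl : 0 ≤ lam) (m : ℕ) :
    ∑' n : ℕ, ((n:ℝ≥0∞)+1)^m * pp lam n
      = ∑ i ∈ Finset.range (m+1), (m.choose i : ℝ≥0∞) * Mo lam i := by
  have hexp : ∀ n : ℕ, ((n:ℝ≥0∞)+1)^m * pp lam n
      = ∑ i ∈ Finset.range (m+1), (m.choose i : ℝ≥0∞) * ((n:ℝ≥0∞)^i * pp lam n) := by
    intro n
    rw [add_pow, Finset.sum_mul]
    refine Finset.sum_congr rfl fun i _ => ?_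
    rw [one_pow]
    ring
  simp_rw [hexp]
  rw [Summable.tsum_finsetSum (fun i _ => ENNReal.summable)]
  refine Finset.sum_congr rfl fun i _ => ?_
  rw [ENNReal.tsum_mul_left]
  rfl

lemma Mo_le {lam : ℝ} (h0 : 0 ≤ lam) (h1 : lam ≤ 1) :
    ∀ m, 1 ≤ m → Mo lam m ≤ ENNReal.ofReal lam * Mo 1 m := by
  intro m
  induction m using Nat.strong_induction_on with
  | _ m ih =>
    intro hm
    obtain ⟨t, rfl⟩ : ∃ t, m = t+1 := ⟨m-1, (Nat.succ_pred_eq_of_pos hm).symm⟩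
    rw [Mo_shift h0 t, Mo_shift zero_le_one t, ENNReal.ofReal_one, one_mul]
    refine mul_le_mul_right ?_ _
    rw [tsum_add_one_pow h0 t, tsum_add_one_pow zero_le_one t]
    refine Finset.sum_le_sum fun i hi => mul_le_mul_right ?_ _
    rcases Nat.eq_zero_or_pos i with rfl | hipos
    · rw [Mo_zero h0, Mo_zero zero_le_one]
    · calc Mo lam i ≤ ENNReal.ofReal lam * Mo 1 i :=
            ih i (Finset.mem_range.mp hi) hipos
        _ ≤ 1 * Mo 1 i := mul_le_mul_left (ENNReal.ofReal_le_one.mpr h1) _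
        _ = Mo 1 i := one_mul _

lemma Mo_one_one : Mo 1 1 = 1 := by
  rw [Mo_shift zero_le_one 0, ENNReal.ofReal_one, one_mul]
  simp_rw [pow_zero, one_mul]
  exact tsum_pp zero_le_one

lemma Mo_one_two : Mo 1 2 = 2 := by
  rw [Mo_shift zero_le_one 1, ENNReal.ofReal_one, one_mul]
  have : ∀ n : ℕ, ((n:ℝ≥0∞)+1)^1 * pp 1 n = (n:ℝ≥0∞)^1 * pp 1 n + pp 1 n := by
    intro n; rw [pow_one, pow_one, add_mul, one_mul]
  simp_rw [this]
  rw [ENNReal.tsum_add, tsum_pp zero_le_one]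
  have : (∑' n : ℕ, (n:ℝ≥0∞)^1 * pp 1 n) = Mo 1 1 := rfl
  rw [this, Mo_one_one]
  norm_num

lemma bellMoment_one : bellMoment 1 = 1 := by
  have h := Mo_one_eq 1
  rw [Mo_one_one] at h
  have := congrArg ENNReal.toReal h
  rwa [ENNReal.toReal_one, ENNReal.toReal_ofReal (bellMoment_nonneg 1), eq_comm] at this

lemma bellMoment_two : bellMoment 2 = 2 := by
  have h := Mo_one_eq 2
  rw [Mo_one_two] at h
  have := congrArg ENNReal.toReal h
  rwa [ENNReal.toReal_ofReal (bellMoment_nonneg 2), eq_comm] at this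
  -- (2:ℝ≥0∞).toReal = 2
  
/-- The per-coordinate moment bound: `E[(X+1) X^a] ≤ lam (B_a + B_{a+1})`. -/
lemma factor_bound {lam : ℝ} (h0 : 0 ≤ lam) (h1 : lam ≤ 1) {a : ℕ} (ha : 1 ≤ a) :
    ∑' n : ℕ, (((n:ℝ≥0∞)+1) * (n:ℝ≥0∞)^a) * pp lam n
      ≤ ENNReal.ofReal (lam * (bellMoment a + bellMoment (a+1))) := by
  have hsplit : ∀ n : ℕ, (((n:ℝ≥0∞)+1) * (n:ℝ≥0∞)^a) * pp lam n
      = (n:ℝ≥0∞)^(a+1) * pp lam n + (n:ℝ≥0∞)^a * pp lam n := by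
    intro n; ring
  simp_rw [hsplit]
  rw [ENNReal.tsum_add]
  have hb1 : Mo lam (a+1) ≤ ENNReal.ofReal lam * ENNReal.ofReal (bellMoment (a+1)) := by
    rw [← Mo_one_eq]; exact Mo_le h0 h1 (a+1) (by omega)
  have hb2 : Mo lam a ≤ ENNReal.ofReal lam * ENNReal.ofReal (bellMoment a) := by
    rw [← Mo_one_eq]; exact Mo_le h0 h1 a ha
  calc Mo lam (a+1) + Mo lam a
      ≤ ENNReal.ofReal lam * ENNReal.ofReal (bellMoment (a+1))
        + ENNReal.ofReal lam * ENNReal.ofReal (bellMoment a) := add_le_add hb1 hb2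
    _ = ENNReal.ofReal (lam * (bellMoment a + bellMoment (a+1))) := by
        rw [← mul_add, ENNReal.ofReal_mul h0,
          ← ENNReal.ofReal_add (bellMoment_nonneg _) (bellMoment_nonneg _), add_comm]

lemma Lset_mono {k : ℕ} {c c' : Fin k → ℕ} (h : c ≤ c') : Lset k c ⊆ Lset k c' :=
  Finset.image_subset_image (Finset.Icc_subset_Icc le_rfl h)

lemma Lset_card_le {k : ℕ} (c : Fin k → ℕ) : (Lset k c).card ≤ ∏ i : Fin k, (c i + 1) := by
  refine Finset.card_image_le.trans_eq ?_
  rw [Pi.card_Icc]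
  exact Finset.prod_congr rfl fun i _ => by simp

variable {k h : ℕ} (j : Fin h → Fin k)

/-- `c` with the coordinates in the range of `j` zeroed out. -/
def zeroJ (c : Fin k → ℕ) : Fin k → ℕ := fun x => if x ∈ Set.range j then 0 else c x

lemma zeroJ_le (c : Fin k → ℕ) : zeroJ j c ≤ c := fun x => by
  unfold zeroJ; split <;> simp

/-- Decoupling: `|𝓛(c)| ≤ (∏ (c_{j i} + 1)) * |𝓛(c̃)|`. -/
lemma card_Lset_le_mul (hj : Function.Injective j) (c : Fin k → ℕ) :
    (Lset k c).card ≤ (∏ i : Fin h, (c (j i) + 1)) * (Lset k (zeroJ j c)).card := by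
  classical
  set projJ : Fin k → ℕ := fun x => if x ∈ Set.range j then c x else 0 with hprojJ
  have hsub : Lset k c ⊆ (Finset.Icc 0 projJ).biUnion
      (fun m => (Lset k (zeroJ j c)).image (fun x => x + ∑ t : Fin k, ((t:ℕ)+1) * m t)) := by
    intro x hx
    rw [Lset, Finset.mem_image] at hx
    obtain ⟨m, hm, rfl⟩ := hx
    rw [Finset.mem_Icc] at hm
    set m1 : Fin k → ℕ := fun t => if t ∈ Set.range j then m t else 0 with hm1
    set m2 : Fin k → ℕ := fun t => if t ∈ Set.range j then 0 else m t with hm2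
    rw [Finset.mem_biUnion]
    refine ⟨m1, ?_, ?_⟩
    · rw [Finset.mem_Icc]
      constructor
      · intro t; simp
      · intro t
        simp only [hm1, hprojJ]
        split
        · exact hm.2 t
        · exact le_rfl
    · rw [Finset.mem_image]
      refine ⟨∑ t : Fin k, ((t:ℕ)+1) * m2 t, ?_, ?_⟩
      · rw [Lset, Finset.mem_image]
        refine ⟨m2, ?_, rfl⟩
        rw [Finset.mem_Icc]
        constructor
        · intro t; simp
        · intro t
          simp only [hm2, zeroJ]
          split
          · exact le_rfl
          · exact hm.2 t
      · rw [← Finset.sum_add_distrib]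
        refine Finset.sum_congr rfl fun t _ => ?_
        rw [← mul_add]
        congr 1
        simp only [hm1, hm2]
        split <;> simp
  calc (Lset k c).card ≤ _ := Finset.card_le_card hsub
    _ ≤ ∑ _m ∈ Finset.Icc 0 projJ, (Lset k (zeroJ j c)).card :=
        Finset.card_biUnion_le.trans (Finset.sum_le_sum fun m _ => Finset.card_image_le)
    _ = (Finset.Icc 0 projJ).card * (Lset k (zeroJ j c)).card := by
        rw [Finset.sum_const, smul_eq_mul]
    _ = (∏ i : Fin h, (c (j i) + 1)) * (Lset k (zeroJ j c)).card := by
        congr 1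
        rw [Pi.card_Icc]
        simp only [Pi.zero_apply, Nat.card_Icc, Nat.sub_zero]
        rw [← Finset.prod_mul_prod_compl (Finset.univ.image j) (fun x => projJ x + 1)]
        have h2 : ∏ x ∈ (Finset.univ.image j)ᶜ, (projJ x + 1) = 1 := by
          refine Finset.prod_eq_one fun x hx => ?_
          have hxr : x ∉ Set.range j := by
            simp only [Finset.mem_compl, Finset.mem_image, Finset.mem_univ, true_and] at hx
            rintro ⟨i, rfl⟩
            exact hx ⟨i, rfl⟩
          simp only [hprojJ, if_neg hxr]
          norm_num
        rw [h2, mul_one, Finset.prod_image (fun i _ i' _ hii => hj hii)]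
        refine Finset.prod_congr rfl fun i _ => ?_
        simp only [hprojJ]
        rw [if_pos ⟨i, rfl⟩]
/-- `lamk x = 1/(x+1)`, the Poisson parameter of coordinate `x`. -/
def lamk {k : ℕ} (x : Fin k) : ℝ := 1 / ((x : ℕ) + 1)

lemma lamk_pos {k : ℕ} (x : Fin k) : 0 < lamk x := by unfold lamk; positivity
lemma lamk_le_one {k : ℕ} (x : Fin k) : lamk x ≤ 1 := by
  unfold lamk
  rw [div_le_one (by positivity)]
  norm_num

variable {k h : ℕ}

/-- Splitting a tuple into coordinates in `Set.range j` (reindexed by `Fin h`) and the rest. -/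
def splitE (j : Fin h → Fin k) (hj : Function.Injective j) :
    (Fin k → ℕ) ≃ (Fin h → ℕ) × ({x : Fin k // x ∉ Set.range j} → ℕ) where
  toFun c := (fun i => c (j i), fun x => c x.1)
  invFun p x := if hx : x ∈ Set.range j then p.1 hx.choose else p.2 ⟨x, hx⟩
  left_inv c := by
    funext x
    by_cases hx : x ∈ Set.range j
    · simp only [dif_pos hx]
      exact congrArg c hx.choose_spec
    · simp only [dif_neg hx]
  right_inv p := by
    obtain ⟨u, v⟩ := p
    refine Prod.ext ?_ ?_
    · funext i
      have hx : j i ∈ Set.range j := ⟨i, rfl⟩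
      simp only [dif_pos hx]
      exact congrArg u (hj hx.choose_spec)
    · funext x
      simp only [dif_neg x.2]

lemma splitE_symm_mem (j : Fin h → Fin k) (hj : Function.Injective j)
    (u : Fin h → ℕ) (v : {x : Fin k // x ∉ Set.range j} → ℕ) (i : Fin h) :
    (splitE j hj).symm (u, v) (j i) = u i := by
  have hx : j i ∈ Set.range j := ⟨i, rfl⟩
  show (if hx : j i ∈ Set.range j then u hx.choose else v ⟨j i, hx⟩) = u i
  rw [dif_pos hx]
  exact congrArg u (hj hx.choose_spec)

lemma splitE_symm_not_mem (j : Fin h → Fin k) (hj : Function.Injective j)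
    (u : Fin h → ℕ) (v : {x : Fin k // x ∉ Set.range j} → ℕ) (x : Fin k)
    (hx : x ∉ Set.range j) :
    (splitE j hj).symm (u, v) x = v ⟨x, hx⟩ := by
  show (if hx' : x ∈ Set.range j then u hx'.choose else v ⟨x, hx'⟩) = v ⟨x, hx⟩
  rw [dif_neg hx]

/-- Finite products of tsums over function spaces. -/
lemma tsum_pi_prod : ∀ {h : ℕ} (g : Fin h → ℕ → ℝ≥0∞),
    ∑' u : Fin h → ℕ, ∏ i : Fin h, g i (u i) = ∏ i : Fin h, ∑' n : ℕ, g i n := by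
  intro h
  induction h with
  | zero =>
    intro g
    simp only [Finset.univ_eq_empty, Finset.prod_empty]
    exact tsum_eq_single (fun i => i.elim0) fun b hb =>
      absurd (funext fun i => i.elim0) hb
  | succ h ih =>
    intro g
    rw [← Equiv.tsum_eq (Fin.consEquiv (fun _ : Fin (h+1) => ℕ))]
    have hb : ∀ p : ℕ × (Fin h → ℕ),
        (∏ i : Fin (h+1), g i (((Fin.consEquiv (fun _ : Fin (h+1) => ℕ)) p) i))
          = g 0 p.1 * ∏ i : Fin h, g i.succ (p.2 i) := by
      rintro ⟨n, u⟩
      rw [Fin.prod_univ_succ]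
      rfl
    simp_rw [hb]
    rw [ENNReal.tsum_prod']
    simp_rw [ENNReal.tsum_mul_left]
    rw [ENNReal.tsum_mul_right, ih (fun i => g i.succ), Fin.prod_univ_succ]

/-- The key factorization of the joint sum. -/
lemma tsum_split (j : Fin h → Fin k) (hj : Function.Injective j)
    (g : Fin h → ℕ → ℝ≥0∞)
    (H : ({x : Fin k // x ∉ Set.range j} → ℕ) → ℝ≥0∞) :
    ∑' c : Fin k → ℕ,
        ((∏ i : Fin h, g i (c (j i))) * H (fun x => c x.1) * ∏ x : Fin k, pp (lamk x) (c x))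
      = (∏ i : Fin h, ∑' n : ℕ, g i n * pp (lamk (j i)) n) *
        ∑' v : {x : Fin k // x ∉ Set.range j} → ℕ,
          (H v * ∏ x : {x : Fin k // x ∉ Set.range j}, pp (lamk x.1) (v x)) := by
  classical
  rw [← Equiv.tsum_eq (splitE j hj).symm]
  have key : ∀ (u : Fin h → ℕ) (v : {x : Fin k // x ∉ Set.range j} → ℕ),
      ((∏ i : Fin h, g i ((splitE j hj).symm (u, v) (j i)))
        * H (fun x => (splitE j hj).symm (u, v) x.1)
        * ∏ x : Fin k, pp (lamk x) ((splitE j hj).symm (u, v) x))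
      = (∏ i : Fin h, g i (u i) * pp (lamk (j i)) (u i))
        * (H v * ∏ x : {x : Fin k // x ∉ Set.range j}, pp (lamk x.1) (v x)) := by
    intro u v
    have h1 : ∀ i : Fin h, (splitE j hj).symm (u, v) (j i) = u i := splitE_symm_mem j hj u v
    have h2 : (fun x : {x : Fin k // x ∉ Set.range j} => (splitE j hj).symm (u, v) x.1) = v := by
      funext x
      rw [splitE_symm_not_mem j hj u v x.1 x.2]
    have h3 : ∏ x : Fin k, pp (lamk x) ((splitE j hj).symm (u, v) x)
        = (∏ i : Fin h, pp (lamk (j i)) (u i))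
          * ∏ x : {x : Fin k // x ∉ Set.range j}, pp (lamk x.1) (v x) := by
      rw [← Fintype.prod_subtype_mul_prod_subtype (fun x : Fin k => x ∈ Set.range j)
        (fun x => pp (lamk x) ((splitE j hj).symm (u, v) x))]
      congr 1
      · refine (@Fintype.prod_bijective (Fin h) {x : Fin k // x ∈ Set.range j} ℝ≥0∞
          _ (Subtype.fintype _) _
          (fun i : Fin h => (⟨j i, ⟨i, rfl⟩⟩ : {x : Fin k // x ∈ Set.range j}))
          ⟨fun i i' hii => hj (congrArg Subtype.val hii), ?_⟩
          (fun i => pp (lamk (j i)) (u i))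
          (fun x => pp (lamk x.1) ((splitE j hj).symm (u, v) x.1)) fun i => ?_).symm
        · rintro ⟨x, i, rfl⟩
          exact ⟨i, rfl⟩
        · simp only
          rw [h1 i]
      · refine Fintype.prod_congr _ _ fun x => ?_
        rw [splitE_symm_not_mem j hj u v x.1 x.2]
    simp_rw [h1]
    rw [h2, h3, Finset.prod_mul_distrib]
    ring
  simp_rw [key]
  rw [ENNReal.tsum_prod']
  simp_rw [ENNReal.tsum_mul_left]
  rw [ENNReal.tsum_mul_right, tsum_pi_prod (fun x n => g x n * pp (lamk (j x)) n)]

variable {k h : ℕ}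

/-- ENNReal version of `EL`. -/
def ELenn (k : ℕ) : ℝ≥0∞ :=
  ∑' c : Fin k → ℕ, ((Lset k c).card : ℝ≥0∞) * ∏ x : Fin k, pp (lamk x) (c x)

lemma ofReal_pmfVec (k : ℕ) (c : Fin k → ℕ) :
    ENNReal.ofReal (pmfVec k c) = ∏ x : Fin k, pp (lamk x) (c x) := by
  rw [pmfVec]
  have : ∀ i : Fin k, poissonPdf (1 / ((i:ℕ) + 1)) (c i) = poissonPdf (lamk i) (c i) := fun i => rfl
  simp_rw [this]
  rw [ENNReal.ofReal_prod_of_nonneg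
    (fun i _ => poissonPdf_nonneg (lamk_pos i).le (c i))]
  rfl

lemma pmfVec_nonneg (k : ℕ) (c : Fin k → ℕ) : 0 ≤ pmfVec k c :=
  Finset.prod_nonneg fun i _ => poissonPdf_nonneg (lamk_pos i).le (c i)

lemma tsum_toReal {ι : Type*} (f : ι → ℝ) (hf : ∀ c, 0 ≤ f c) :
    ∑' c, f c = (∑' c, ENNReal.ofReal (f c)).toReal := by
  rw [ENNReal.tsum_toReal_eq (fun c => ENNReal.ofReal_ne_top)]
  exact tsum_congr fun c => (ENNReal.toReal_ofReal (hf c)).symm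

lemma EL_eq (k : ℕ) : EL k = (ELenn k).toReal := by
  rw [EL, tsum_toReal _ (fun c => mul_nonneg (Nat.cast_nonneg _) (pmfVec_nonneg k c))]
  congr 1
  refine tsum_congr fun c => ?_
  rw [ENNReal.ofReal_mul (Nat.cast_nonneg _), ENNReal.ofReal_natCast, ofReal_pmfVec]

lemma ELenn_ne_top (k : ℕ) : ELenn k ≠ ⊤ := by
  have hle : ELenn k ≤ ∑' c : Fin k → ℕ, ∏ x : Fin k, (((c x : ℝ≥0∞)) + 1) * pp (lamk x) (c x) := by
    refine ENNReal.tsum_le_tsum fun c => ?_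
    rw [Finset.prod_mul_distrib]
    refine mul_le_mul_left ?_ _
    calc ((Lset k c).card : ℝ≥0∞) ≤ ((∏ x : Fin k, (c x + 1) : ℕ) : ℝ≥0∞) :=
          Nat.cast_le.2 (Lset_card_le c)
      _ = ∏ x : Fin k, ((c x : ℝ≥0∞) + 1) := by push_cast; rfl
  refine ne_top_of_le_ne_top ?_ hle
  rw [tsum_pi_prod (fun x n => ((n : ℝ≥0∞) + 1) * pp (lamk x) n)]
  refine ENNReal.prod_ne_top fun x _ => ?_
  have : ∀ n : ℕ, ((n : ℝ≥0∞) + 1) * pp (lamk x) n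
      = (n : ℝ≥0∞) ^ 1 * pp (lamk x) n + pp (lamk x) n := by
    intro n; rw [pow_one, add_mul, one_mul]
  simp_rw [this]
  rw [ENNReal.tsum_add, tsum_pp (lamk_pos x).le]
  exact ENNReal.add_ne_top.2 ⟨Mo_ne_top (lamk_pos x).le (lamk_le_one x) 1, ENNReal.one_ne_top⟩

/-- Main inequality in `ℝ≥0∞`. -/
lemma main_enn (j : Fin h → Fin k) (hj : Function.Injective j)
    (a : Fin h → ℕ) (ha : ∀ i, 1 ≤ a i) :
    ∑' c : Fin k → ℕ, ((Lset k c).card : ℝ≥0∞)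
        * (∏ i : Fin h, (c (j i) : ℝ≥0∞) ^ (a i)) * ∏ x : Fin k, pp (lamk x) (c x)
      ≤ (∏ i : Fin h,
          ENNReal.ofReal (lamk (j i) * (bellMoment (a i) + bellMoment (a i + 1)))) * ELenn k := by
  classical
  set H : ({x : Fin k // x ∉ Set.range j} → ℕ) → ℝ≥0∞ := fun v =>
    ((Lset k (fun x => if hx : x ∈ Set.range j then 0 else v ⟨x, hx⟩)).card : ℝ≥0∞) with hH
  have hHr : ∀ c : Fin k → ℕ,
      H (fun x => c x.1) = ((Lset k (zeroJ j c)).card : ℝ≥0∞) := by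
    intro c
    simp only [hH]
    have : (fun x => if hx : x ∈ Set.range j then 0 else c x) = zeroJ j c := by
      funext x
      by_cases hx : x ∈ Set.range j
      · rw [dif_pos hx, zeroJ, if_pos hx]
      · rw [dif_neg hx, zeroJ, if_neg hx]
    rw [this]
  have step1 : ∑' c : Fin k → ℕ, ((Lset k c).card : ℝ≥0∞)
        * (∏ i : Fin h, (c (j i) : ℝ≥0∞) ^ (a i)) * ∏ x : Fin k, pp (lamk x) (c x)
      ≤ ∑' c : Fin k → ℕ,
        ((∏ i : Fin h, (((c (j i) : ℝ≥0∞)) + 1) * (c (j i) : ℝ≥0∞) ^ (a i))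
          * H (fun x => c x.1) * ∏ x : Fin k, pp (lamk x) (c x)) := by
    refine ENNReal.tsum_le_tsum fun c => ?_
    rw [hHr c]
    refine mul_le_mul_left ?_ _
    have hcard : ((Lset k c).card : ℝ≥0∞)
        ≤ (∏ i : Fin h, ((c (j i) : ℝ≥0∞) + 1)) * ((Lset k (zeroJ j c)).card : ℝ≥0∞) := by
      calc ((Lset k c).card : ℝ≥0∞)
          ≤ (((∏ i : Fin h, (c (j i) + 1)) * (Lset k (zeroJ j c)).card : ℕ) : ℝ≥0∞) :=
            Nat.cast_le.2 (card_Lset_le_mul j hj c)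
        _ = _ := by push_cast; rfl
    calc ((Lset k c).card : ℝ≥0∞) * ∏ i : Fin h, (c (j i) : ℝ≥0∞) ^ (a i)
        ≤ ((∏ i : Fin h, ((c (j i) : ℝ≥0∞) + 1)) * ((Lset k (zeroJ j c)).card : ℝ≥0∞))
          * ∏ i : Fin h, (c (j i) : ℝ≥0∞) ^ (a i) := mul_le_mul_left hcard _
      _ = (∏ i : Fin h, (((c (j i) : ℝ≥0∞)) + 1) * (c (j i) : ℝ≥0∞) ^ (a i))
          * ((Lset k (zeroJ j c)).card : ℝ≥0∞) := by
          rw [Finset.prod_mul_distrib]; ring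
  have step2 := tsum_split j hj (fun i n => ((n : ℝ≥0∞) + 1) * (n : ℝ≥0∞) ^ (a i)) H
  rw [step2] at step1
  set T := ∑' v : {x : Fin k // x ∉ Set.range j} → ℕ,
    (H v * ∏ x : {x : Fin k // x ∉ Set.range j}, pp (lamk x.1) (v x)) with hT
  have step3 : (∏ i : Fin h, ∑' n : ℕ, (((n : ℝ≥0∞) + 1) * (n : ℝ≥0∞) ^ (a i)) * pp (lamk (j i)) n)
      ≤ ∏ i : Fin h, ENNReal.ofReal (lamk (j i) * (bellMoment (a i) + bellMoment (a i + 1))) :=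
    Finset.prod_le_prod' fun i _ =>
      factor_bound (lamk_pos (j i)).le (lamk_le_one (j i)) (ha i)
  have step4 : T ≤ ELenn k := by
    have h1 := tsum_split j hj (fun _ n => (1 : ℝ≥0∞)) H
    have h2 : (∏ i : Fin h, ∑' n : ℕ, (1 : ℝ≥0∞) * pp (lamk (j i)) n) = 1 := by
      refine Finset.prod_eq_one fun i _ => ?_
      simp_rw [one_mul]
      exact tsum_pp (lamk_pos (j i)).le
    rw [h2, one_mul] at h1
    rw [← hT] at h1  -- T equals RHS of h1?
    rw [← h1]
    refine ENNReal.tsum_le_tsum fun c => ?_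
    rw [hHr c, Finset.prod_const_one, one_mul]
    refine mul_le_mul_left ?_ _
    exact Nat.cast_le.2 (Finset.card_le_card (Lset_mono (zeroJ_le j c)))
  exact step1.trans (mul_le_mul' step3 step4)

lemma ofReal_term (k : ℕ) (j : Fin h → Fin k) (a : Fin h → ℕ) (c : Fin k → ℕ) :
    ENNReal.ofReal (((Lset k c).card : ℝ) * (∏ i : Fin h, (c (j i) : ℝ) ^ (a i)) * pmfVec k c)
      = ((Lset k c).card : ℝ≥0∞) * (∏ i : Fin h, (c (j i) : ℝ≥0∞) ^ (a i))
        * ∏ x : Fin k, pp (lamk x) (c x) := by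
  rw [ENNReal.ofReal_mul (by positivity), ENNReal.ofReal_mul (Nat.cast_nonneg _), ofReal_pmfVec]
  congr 2
  · exact ENNReal.ofReal_natCast _
  · rw [ENNReal.ofReal_prod_of_nonneg (fun i _ => by positivity)]
    exact Finset.prod_congr rfl fun i _ => by
      rw [ENNReal.ofReal_pow (Nat.cast_nonneg _), ENNReal.ofReal_natCast]

lemma part1 (k h : ℕ) (j : Fin h → Fin k) (hj : Function.Injective j)
    (a : Fin h → ℕ) (ha : ∀ i, 1 ≤ a i) :
    (∑' c : Fin k → ℕ,
        ((Lset k c).card : ℝ) * (∏ i : Fin h, (c (j i) : ℝ) ^ (a i)) * pmfVec k c) ≤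
      (∏ i : Fin h, (bellMoment (a i) + bellMoment (a i + 1))) /
        (∏ i : Fin h, ((j i : ℕ) + 1 : ℝ)) * EL k := by
  have henn := main_enn j hj a ha
  set C : ℝ := ∏ i : Fin h, lamk (j i) * (bellMoment (a i) + bellMoment (a i + 1)) with hC
  have hCnn : 0 ≤ C := Finset.prod_nonneg fun i _ =>
    mul_nonneg (lamk_pos _).le (add_nonneg (bellMoment_nonneg _) (bellMoment_nonneg _))
  have hCo : (∏ i : Fin h,
        ENNReal.ofReal (lamk (j i) * (bellMoment (a i) + bellMoment (a i + 1))))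
      = ENNReal.ofReal C := by
    rw [hC, ENNReal.ofReal_prod_of_nonneg fun i _ =>
      mul_nonneg (lamk_pos _).le (add_nonneg (bellMoment_nonneg _) (bellMoment_nonneg _))]
  rw [hCo] at henn
  have hLHS : (∑' c : Fin k → ℕ,
        ((Lset k c).card : ℝ) * (∏ i : Fin h, (c (j i) : ℝ) ^ (a i)) * pmfVec k c)
      = (∑' c : Fin k → ℕ, ((Lset k c).card : ℝ≥0∞)
          * (∏ i : Fin h, (c (j i) : ℝ≥0∞) ^ (a i)) * ∏ x : Fin k, pp (lamk x) (c x)).toReal := by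
    rw [tsum_toReal _ (fun c => mul_nonneg (mul_nonneg (Nat.cast_nonneg _)
      (Finset.prod_nonneg fun i _ => by positivity)) (pmfVec_nonneg k c))]
    congr 1
    exact tsum_congr (ofReal_term k j a)
  rw [hLHS, EL_eq]
  have hfin : ENNReal.ofReal C * ELenn k ≠ ⊤ :=
    ENNReal.mul_ne_top ENNReal.ofReal_ne_top (ELenn_ne_top k)
  calc _ ≤ (ENNReal.ofReal C * ELenn k).toReal := ENNReal.toReal_mono hfin henn
    _ = C * (ELenn k).toReal := by rw [ENNReal.toReal_mul, ENNReal.toReal_ofReal hCnn]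
    _ = _ := by
      congr 1
      rw [hC, Finset.prod_mul_distrib]
      have hl : ∀ i : Fin h, lamk (j i) = 1 / (((j i : ℕ) : ℝ) + 1) := fun i => rfl
      simp_rw [hl]
      rw [Finset.prod_div_distrib, Finset.prod_const_one, one_div, inv_mul_eq_div,
        div_eq_div_iff (by positivity) (by positivity)]

end MixedMoment

theorem mixed_moment_bound :
    (∀ (k h : ℕ), 0 < k → ∀ (j : Fin h → Fin k), Function.Injective j →
      ∀ (a : Fin h → ℕ), (∀ i, 1 ≤ a i) →
        (∑' c : Fin k → ℕ,
            ((Lset k c).card : ℝ) * (∏ i : Fin h, (c (j i) : ℝ) ^ (a i)) * pmfVec k c) ≤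
          (∏ i : Fin h, (bellMoment (a i) + bellMoment (a i + 1))) /
            (∏ i : Fin h, ((j i : ℕ) + 1 : ℝ)) * EL k) ∧
    (∀ (k : ℕ), 0 < k → ∀ j : Fin k,
        (∑' c : Fin k → ℕ, ((Lset k c).card : ℝ) * (c j : ℝ) * pmfVec k c) ≤
          3 / ((j : ℕ) + 1 : ℝ) * EL k) := by
  constructor
  · intro k h _ j hj a ha
    exact MixedMoment.part1 k h j hj a ha
  · intro k _ j
    have h1 := MixedMoment.part1 k 1 (fun _ => j)
      (fun i i' _ => Subsingleton.elim i i') (fun _ => 1) (fun _ => le_rfl)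
    have hL : (∑' c : Fin k → ℕ,
        ((Lset k c).card : ℝ) * (∏ i : Fin 1, (c j : ℝ) ^ (1:ℕ)) * pmfVec k c)
        = ∑' c : Fin k → ℕ, ((Lset k c).card : ℝ) * (c j : ℝ) * pmfVec k c := by
      refine tsum_congr fun c => ?_
      rw [Fin.prod_univ_one, pow_one]
    rw [hL] at h1
    refine h1.trans_eq ?_
    congr 1
    rw [Fin.prod_univ_one, Fin.prod_univ_one, MixedMoment.bellMoment_one,
      MixedMoment.bellMoment_two]
    norm_num
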